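/- arXiv:math/9907141 — 3 statements merged into one kernel-verified Lean document; each statement's English description precedes it below -/
import Mathlib

section
/- The number of special roots (positive roots α such that θ − α is also a root) equals 2(h∨ − 2), where h∨ is the dual Coxeter number. -/
open RealInnerProductSpace Finset
open scoped Classical

/-- The data of a reduced irreducible (crystallographic) root system of a
finite-dimensional complex simple Lie algebra, realized in a real inner
product space, together with a choice of positive roots and the highest
root `θ`, with the invariant form normalized so that `(θ,θ) = 2`. -/
structure SimpleRootData (V : Type*) [NormedAddCommGroup V]
    [InnerProductSpace ℝ V] [FiniteDimensional ℝ V] where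
  /-- the set of roots Δ -/
  Δ : Finset V
  /-- the set of positive roots Δ₊ -/
  Pos : Finset V
  /-- the highest root θ -/
  θ : V
  zero_not_mem : (0 : V) ∉ Δ
  span_eq_top : Submodule.span ℝ (Δ : Set V) = ⊤
  neg_mem : ∀ α ∈ Δ, -α ∈ Δ
  reflect_mem : ∀ α ∈ Δ, ∀ β ∈ Δ,
    β - (2 * (inner ℝ β α : ℝ) / (inner ℝ α α : ℝ)) • α ∈ Δ
  integral : ∀ α ∈ Δ, ∀ β ∈ Δ, ∃ n : ℤ, 2 * (inner ℝ β α : ℝ) / (inner ℝ α α : ℝ) = (n : ℝ)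
  reduced : ∀ α ∈ Δ, ∀ t : ℝ, t • α ∈ Δ → t = 1 ∨ t = -1
  /-- irreducibility (simplicity of the Lie algebra) -/
  irreducible : ∀ s ⊆ Δ, (∀ α ∈ s, ∀ β ∈ Δ, β ∉ s → (inner ℝ α β : ℝ) = 0) →
    s = ∅ ∨ s = Δ
  pos_subset : Pos ⊆ Δ
  pos_iff : ∀ α ∈ Δ, α ∈ Pos ↔ -α ∉ Pos
  pos_add : ∀ α ∈ Pos, ∀ β ∈ Pos, α + β ∈ Δ → α + β ∈ Pos
  θ_pos : θ ∈ Pos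
  /-- θ is the highest root -/
  θ_highest : ∀ α ∈ Pos, θ + α ∉ Δ
  /-- normalization (θ,θ) = 2 -/
  θ_norm : (inner ℝ θ θ : ℝ) = 2

namespace SimpleRootData

variable {V : Type*} [NormedAddCommGroup V] [InnerProductSpace ℝ V]
  [FiniteDimensional ℝ V] (D : SimpleRootData V)

/-- ρ, half the sum of the positive roots. -/
noncomputable def ρ : V := (2 : ℝ)⁻¹ • ∑ α ∈ D.Pos, α

/-- The dual Coxeter number h∨ = (ρ,θ) + 1. -/
noncomputable def h : ℝ := (inner ℝ D.ρ D.θ : ℝ) + 1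

/-- The reflection r_θ in the highest root θ. -/
noncomputable def rθ (x : V) : V := x - (2 * (inner ℝ x D.θ : ℝ) / (inner ℝ D.θ D.θ : ℝ)) • D.θ

/-- A positive root α is *special* if θ − α is also a root. -/
def IsSpecial (α : V) : Prop := α ∈ D.Pos ∧ D.θ - α ∈ D.Δ

/-- The set of special roots. -/
noncomputable def specials : Finset V :=
  D.Pos.filter fun α => D.θ - α ∈ D.Δ

/-- The set of positive roots not orthogonal to θ. -/
noncomputable def nonOrth : Finset V :=
  D.Pos.filter fun α => (inner ℝ α D.θ : ℝ) ≠ 0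

end SimpleRootData

open SimpleRootData

variable {V : Type*} [NormedAddCommGroup V] [InnerProductSpace ℝ V]
  [FiniteDimensional ℝ V]


section Aux

variable (D : SimpleRootData V)

lemma aux_ne_zero {α : V} (hα : α ∈ D.Δ) : α ≠ 0 :=
  fun e => D.zero_not_mem (e ▸ hα)

lemma aux_theta_mem : D.θ ∈ D.Δ := D.pos_subset D.θ_pos

lemma aux_neg_theta_not_pos : -D.θ ∉ D.Pos :=
  (D.pos_iff D.θ (aux_theta_mem D)).1 D.θ_pos

lemma aux_reflect_theta {α : V} (hα : α ∈ D.Δ) :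
    α - (inner ℝ α D.θ : ℝ) • D.θ ∈ D.Δ := by
  have h := D.reflect_mem D.θ (aux_theta_mem D) α hα
  rw [D.θ_norm] at h
  rwa [show (2 * (inner ℝ α D.θ : ℝ) / 2) = (inner ℝ α D.θ : ℝ) by ring] at h

lemma aux_int_theta {α : V} (hα : α ∈ D.Δ) : ∃ n : ℤ, (inner ℝ α D.θ : ℝ) = n := by
  obtain ⟨n, hn⟩ := D.integral D.θ (aux_theta_mem D) α hα
  rw [D.θ_norm] at hn
  exact ⟨n, by rw [← hn]; ring⟩

lemma aux_cs {α : V} (hα : α ∈ D.Δ) (h1 : α ≠ D.θ) (h2 : α ≠ -D.θ) :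
    (inner ℝ α D.θ : ℝ) ^ 2 < (inner ℝ α α : ℝ) * 2 := by
  have hθ := aux_theta_mem D
  have hθ0 : D.θ ≠ 0 := aux_ne_zero D hθ
  have hnθ : (0 : ℝ) < ‖D.θ‖ := norm_pos_iff.2 hθ0
  have key : ∀ t : ℝ, α = t • D.θ → False := by
    intro t ht
    have hmem : t • D.θ ∈ D.Δ := by rw [← ht]; exact hα
    rcases D.reduced D.θ hθ t hmem with h | h
    · rw [h, one_smul] at ht; exact h1 ht
    · rw [h, neg_one_smul] at ht; exact h2 ht
  have hlt1 : (inner ℝ α D.θ : ℝ) < ‖α‖ * ‖D.θ‖ := by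
    rw [inner_lt_norm_mul_iff_real]
    intro hc
    refine key (‖D.θ‖⁻¹ * ‖α‖) ?_
    rw [mul_smul, ← hc, smul_smul, inv_mul_cancel₀ hnθ.ne', one_smul]
  have hlt2 : -(inner ℝ α D.θ : ℝ) < ‖α‖ * ‖D.θ‖ := by
    have h := @inner_lt_norm_mul_iff_real V _ _ α (-D.θ)
    rw [inner_neg_right, norm_neg] at h
    rw [h]
    intro hc
    refine key (‖D.θ‖⁻¹ * (-‖α‖)) ?_
    rw [mul_smul, neg_smul, ← smul_neg, ← hc, smul_smul, inv_mul_cancel₀ hnθ.ne',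
      one_smul]
  have hsq : (inner ℝ α D.θ : ℝ) ^ 2 < (‖α‖ * ‖D.θ‖) ^ 2 :=
    sq_lt_sq' (by linarith) hlt1
  rwa [mul_pow, ← real_inner_self_eq_norm_sq, ← real_inner_self_eq_norm_sq,
    D.θ_norm] at hsq

lemma aux_add_mem {α : V} (hα : α ∈ D.Δ) (hne : α ≠ -D.θ)
    (hneg : (inner ℝ α D.θ : ℝ) < 0) : D.θ + α ∈ D.Δ := by
  have hθ := aux_theta_mem D
  have hne1 : α ≠ D.θ := by
    rintro rfl; rw [D.θ_norm] at hneg; linarith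
  obtain ⟨n, hn⟩ := aux_int_theta D hα
  obtain ⟨m, hm⟩ := D.integral α hα D.θ hθ
  have hαα : (0 : ℝ) < inner ℝ α α := lt_of_le_of_ne real_inner_self_nonneg (Ne.symm (inner_self_ne_zero.2 (aux_ne_zero D hα)))
  have hmm : (m : ℝ) * inner ℝ α α = 2 * inner ℝ α D.θ := by
    rw [← hm, real_inner_comm α D.θ, div_mul_cancel₀]
    exact hαα.ne'
  by_cases hn1 : n = -1
  · have h := aux_reflect_theta D hα
    rw [hn, hn1] at h
    have e : α - ((-1 : ℤ) : ℝ) • D.θ = D.θ + α := by push_cast; module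
    rwa [e] at h
  · by_cases hm1 : m = -1
    · have h := D.reflect_mem α hα D.θ hθ
      rw [hm, hm1] at h
      have e : D.θ - ((-1 : ℤ) : ℝ) • α = D.θ + α := by push_cast; module
      rwa [e] at h
    · exfalso
      have hcs := aux_cs D hα hne1 hne
      have hnneg : (n : ℝ) < 0 := hn ▸ hneg
      have hmneg : (m : ℝ) < 0 := by nlinarith
      have hnm : (n : ℝ) * m < 4 := by nlinarith [hn ▸ hcs]
      have hn2 : n ≤ -2 := by
        have : n < 0 := by exact_mod_cast hnneg
        omega
      have hm2 : m ≤ -2 := by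
        have : m < 0 := by exact_mod_cast hmneg
        omega
      have : (4 : ℤ) ≤ n * m := by nlinarith
      have : (4 : ℝ) ≤ (n : ℝ) * m := by exact_mod_cast this
      linarith

lemma aux_nonneg {α : V} (hα : α ∈ D.Pos) : 0 ≤ (inner ℝ α D.θ : ℝ) := by
  by_contra hneg
  push_neg at hneg
  have hne : α ≠ -D.θ := by rintro rfl; exact aux_neg_theta_not_pos D hα
  exact D.θ_highest α hα (aux_add_mem D (D.pos_subset hα) hne hneg)

lemma aux_sub_pos {α : V} (hα : α ∈ D.Δ) (hβ : D.θ - α ∈ D.Δ) :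
    D.θ - α ∈ D.Pos := by
  rw [D.pos_iff _ hβ]
  intro hc
  refine D.θ_highest _ hc ?_
  rw [show D.θ + -(D.θ - α) = α by abel]
  exact hα

lemma aux_le_one {α : V} (hα : α ∈ D.Pos) (hne : α ≠ D.θ) :
    (inner ℝ α D.θ : ℝ) ≤ 1 := by
  by_contra hgt
  push_neg at hgt
  have hαΔ := D.pos_subset hα
  have hθ := aux_theta_mem D
  have hne2 : α ≠ -D.θ := fun e => aux_neg_theta_not_pos D (e ▸ hα)
  obtain ⟨n, hn⟩ := aux_int_theta D hαΔ
  have hn2 : (2 : ℝ) ≤ n := by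
    have h1 : (1 : ℝ) < n := hn ▸ hgt
    have : (1 : ℤ) < n := by exact_mod_cast h1
    exact_mod_cast this
  obtain ⟨m, hm⟩ := D.integral α hαΔ D.θ hθ
  have hαα : (0 : ℝ) < inner ℝ α α := lt_of_le_of_ne real_inner_self_nonneg (Ne.symm (inner_self_ne_zero.2 (aux_ne_zero D hαΔ)))
  have hmm : (m : ℝ) * inner ℝ α α = 2 * inner ℝ α D.θ := by
    rw [← hm, real_inner_comm α D.θ, div_mul_cancel₀]
    exact hαα.ne'
  have hcs := aux_cs D hαΔ hne hne2
  have hm1 : m = 1 := by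
    have hmpos : (0 : ℝ) < m := by nlinarith
    have hnm : (n : ℝ) * m < 4 := by nlinarith [hn ▸ hcs]
    have h1 : (0 : ℤ) < m := by exact_mod_cast hmpos
    have h2 : (n : ℝ) * m < (n : ℝ) * 2 → (m : ℝ) < 2 := by
      intro hh
      have := (mul_lt_mul_iff_right₀ (by linarith : (0:ℝ) < n)).1 hh
      linarith
    have h3 : (m : ℝ) < 2 := by nlinarith
    have : m < 2 := by exact_mod_cast h3
    omega
  have hβ : D.θ - α ∈ D.Δ := by
    have h := D.reflect_mem α hαΔ D.θ hθ
    rw [hm, hm1] at h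
    simpa using h
  have hβpos := aux_sub_pos D hαΔ hβ
  have hnn := aux_nonneg D hβpos
  rw [inner_sub_left, D.θ_norm] at hnn
  have hn4 : (inner ℝ α D.θ : ℝ) = 2 := by
    rw [hn] at hnn ⊢
    have : (n : ℝ) ≤ 2 := by linarith
    linarith
  have hr := aux_reflect_theta D hαΔ
  rw [hn4] at hr
  have hneg := D.neg_mem _ hr
  have e : -(α - (2 : ℝ) • D.θ) = D.θ + (D.θ - α) := by module
  rw [e] at hneg
  exact D.θ_highest _ hβpos hneg

lemma aux_special_iff {α : V} (hα : α ∈ D.Pos) :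
    D.θ - α ∈ D.Δ ↔ (inner ℝ α D.θ : ℝ) = 1 := by
  constructor
  · intro hβ
    have hαΔ := D.pos_subset hα
    have hne : α ≠ D.θ := by
      rintro rfl
      rw [sub_self] at hβ
      exact D.zero_not_mem hβ
    obtain ⟨n, hn⟩ := aux_int_theta D hαΔ
    have h0 := aux_nonneg D hα
    have h1 := aux_le_one D hα hne
    by_contra hne1
    have hn0 : (inner ℝ α D.θ : ℝ) = 0 := by
      rw [hn] at h0 h1 hne1 ⊢
      have i0 : (0 : ℤ) ≤ n := by exact_mod_cast h0
      have i1 : n ≤ 1 := by exact_mod_cast h1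
      have i2 : n ≠ 1 := by
        intro e; exact hne1 (by rw [e]; norm_num)
      have : n = 0 := by omega
      rw [this]; norm_num
    have hβpos := aux_sub_pos D hαΔ hβ
    have hβne : D.θ - α ≠ D.θ := by
      intro e
      have : α = 0 := by
        have := sub_eq_self.1 e
        simpa [neg_eq_zero] using this
      exact aux_ne_zero D hαΔ this
    have := aux_le_one D hβpos hβne
    rw [inner_sub_left, D.θ_norm, hn0] at this
    linarith
  · intro h1
    have hr := aux_reflect_theta D (D.pos_subset hα)
    rw [h1, one_smul] at hr
    have := D.neg_mem _ hr
    rwa [neg_sub] at this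

end Aux


/-- the number of special roots equals 2(h∨ − 2). -/
theorem card_specials (D : SimpleRootData V) :
    (D.specials.card : ℝ) = 2 * (D.h - 2) := by
  classical
  have hsum : ∑ α ∈ D.Pos, (inner ℝ α D.θ : ℝ) = D.specials.card + 2 := by
    rw [← Finset.sum_filter_add_sum_filter_not D.Pos (fun α => D.θ - α ∈ D.Δ)]
    have e1 : ∑ α ∈ D.Pos.filter (fun α => D.θ - α ∈ D.Δ), (inner ℝ α D.θ : ℝ)
        = D.specials.card := by
      calc ∑ α ∈ D.Pos.filter (fun α => D.θ - α ∈ D.Δ), (inner ℝ α D.θ : ℝ)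
          = ∑ _α ∈ D.Pos.filter (fun α => D.θ - α ∈ D.Δ), (1 : ℝ) := by
            refine Finset.sum_congr rfl fun α hαm => ?_
            obtain ⟨hp, hs⟩ := Finset.mem_filter.1 hαm
            exact (aux_special_iff D hp).1 hs
        _ = D.specials.card := by simp [SimpleRootData.specials]
    have e2 : ∑ α ∈ D.Pos.filter (fun α => ¬ D.θ - α ∈ D.Δ), (inner ℝ α D.θ : ℝ)
        = 2 := by
      have hθmem : D.θ ∈ D.Pos.filter (fun α => ¬ D.θ - α ∈ D.Δ) := by
        refine Finset.mem_filter.2 ⟨D.θ_pos, ?_⟩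
        rw [sub_self]
        exact D.zero_not_mem
      rw [← Finset.add_sum_erase _ _ hθmem, D.θ_norm]
      have hz : ∑ α ∈ (D.Pos.filter (fun α => ¬ D.θ - α ∈ D.Δ)).erase D.θ,
          (inner ℝ α D.θ : ℝ) = 0 := by
        refine Finset.sum_eq_zero fun α hαm => ?_
        obtain ⟨hne, hmem⟩ := Finset.mem_erase.1 hαm
        obtain ⟨hp, hns⟩ := Finset.mem_filter.1 hmem
        obtain ⟨n, hn⟩ := aux_int_theta D (D.pos_subset hp)
        have h0 := aux_nonneg D hp
        have h1 := aux_le_one D hp hne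
        have hne1 : (inner ℝ α D.θ : ℝ) ≠ 1 := fun e =>
          hns ((aux_special_iff D hp).2 e)
        rw [hn] at h0 h1 hne1 ⊢
        have i0 : (0 : ℤ) ≤ n := by exact_mod_cast h0
        have i1 : n ≤ 1 := by exact_mod_cast h1
        have i2 : n ≠ 1 := by
          intro e; exact hne1 (by rw [e]; norm_num)
        have : n = 0 := by omega
        rw [this]; norm_num
      rw [hz]; ring
    rw [e1, e2]
  have hρ : (inner ℝ D.ρ D.θ : ℝ) = ((D.specials.card : ℝ) + 2) / 2 := by
    rw [SimpleRootData.ρ, real_inner_smul_left, sum_inner, hsum]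
    ring
  rw [SimpleRootData.h, hρ]
  ring
end

section
/- The number of positive roots not orthogonal to the highest root θ equals 2h∨ − 3, where h∨ is the dual Coxeter number. -/
open RealInnerProductSpace Finset
open scoped Classical

open SimpleRootData

variable {V : Type*} [NormedAddCommGroup V] [InnerProductSpace ℝ V]
  [FiniteDimensional ℝ V]


section Aux

/-- Key lemma: if two distinct roots have positive inner ℝ product, their
difference is a root. -/
theorem SimpleRootData.sub_mem_of_inner_pos (D : SimpleRootData V)
    {α β : V} (hα : α ∈ D.Δ) (hβ : β ∈ D.Δ) (hpos : 0 < (inner ℝ α β : ℝ))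
    (hne : α ≠ β) : α - β ∈ D.Δ := by
  have hα0 : α ≠ 0 := fun h => D.zero_not_mem (h ▸ hα)
  have hβ0 : β ≠ 0 := fun h => D.zero_not_mem (h ▸ hβ)
  have hAA : (0:ℝ) < inner ℝ α α :=
    lt_of_le_of_ne real_inner_self_nonneg
      (fun h0 => hα0 (inner_self_eq_zero.mp h0.symm))
  have hBB : (0:ℝ) < inner ℝ β β :=
    lt_of_le_of_ne real_inner_self_nonneg
      (fun h0 => hβ0 (inner_self_eq_zero.mp h0.symm))
  obtain ⟨m, hm⟩ := D.integral β hβ α hα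
  obtain ⟨n, hn⟩ := D.integral α hα β hβ
  have hba : (inner ℝ β α : ℝ) = inner ℝ α β := real_inner_comm α β
  have hm1 : (1:ℤ) ≤ m := by
    have h0 : (0:ℝ) < (m:ℝ) := by rw [← hm]; positivity
    have : (0:ℤ) < m := by exact_mod_cast h0
    omega
  have hn1 : (1:ℤ) ≤ n := by
    have h0 : (0:ℝ) < (n:ℝ) := by rw [← hn, hba]; positivity
    have : (0:ℤ) < n := by exact_mod_cast h0
    omega
  have hmn : m * n ≤ 4 := by
    have hcs := real_inner_mul_inner_self_le α β
    have h4 : ((m:ℝ)) * n ≤ 4 := by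
      rw [← hm, ← hn, hba, div_mul_div_comm, div_le_iff₀ (by positivity)]
      nlinarith [hcs]
    exact_mod_cast h4
  rcases eq_or_lt_of_le hm1 with hm1' | hm2
  · have h := D.reflect_mem β hβ α hα
    rw [hm, ← hm1', Int.cast_one, one_smul] at h
    exact h
  rcases eq_or_lt_of_le hn1 with hn1' | hn2
  · have h := D.reflect_mem α hα β hβ
    rw [hn, ← hn1', Int.cast_one, one_smul] at h
    have h' := D.neg_mem _ h
    rwa [neg_sub] at h'
  exfalso
  have hm2' : m = 2 := by nlinarith
  have hn2' : n = 2 := by nlinarith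
  rw [hm2'] at hm; rw [hn2'] at hn
  push_cast at hm hn
  have h1 : (inner ℝ α β : ℝ) = inner ℝ β β := by
    field_simp at hm; linarith
  have h2 : (inner ℝ α β : ℝ) = inner ℝ α α := by
    rw [hba] at hn; field_simp at hn; linarith
  have h0 : (inner ℝ (α - β) (α - β) : ℝ) = 0 := by
    rw [real_inner_sub_sub_self]; linarith
  exact hne (sub_eq_zero.mp (inner_self_eq_zero.mp h0))

/-- Positive roots pair nonnegatively with θ. -/
theorem SimpleRootData.inner_theta_nonneg (D : SimpleRootData V)
    {α : V} (hα : α ∈ D.Pos) : 0 ≤ (inner ℝ α D.θ : ℝ) := by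
  by_contra hlt
  push_neg at hlt
  have hθΔ : D.θ ∈ D.Δ := D.pos_subset D.θ_pos
  have hαΔ : α ∈ D.Δ := D.pos_subset hα
  have hnθ : -D.θ ∈ D.Δ := D.neg_mem _ hθΔ
  have hne : α ≠ -D.θ := by
    intro h
    have := (D.pos_iff D.θ hθΔ).mp D.θ_pos
    exact this (h ▸ hα)
  have hip : 0 < (inner ℝ α (-D.θ) : ℝ) := by
    rw [inner_neg_right]; linarith
  have hmem := D.sub_mem_of_inner_pos hαΔ hnθ hip hne
  rw [sub_neg_eq_add] at hmem
  exact D.θ_highest α hα (by rwa [add_comm])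

/-- If a positive root ≠ θ pairs positively with θ, then θ − α is a positive root. -/
theorem SimpleRootData.theta_sub_pos (D : SimpleRootData V)
    {α : V} (hα : α ∈ D.Pos) (hne : α ≠ D.θ) (hip : 0 < (inner ℝ α D.θ : ℝ)) :
    D.θ - α ∈ D.Pos := by
  have hθΔ : D.θ ∈ D.Δ := D.pos_subset D.θ_pos
  have hαΔ : α ∈ D.Δ := D.pos_subset hα
  have hip' : 0 < (inner ℝ D.θ α : ℝ) := by rwa [real_inner_comm]
  have hmem : D.θ - α ∈ D.Δ := D.sub_mem_of_inner_pos hθΔ hαΔ hip' (Ne.symm hne)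
  by_contra hnp
  have hneg : α - D.θ ∈ D.Δ := by
    have := D.neg_mem _ hmem
    rwa [neg_sub] at this
  have hpos' : α - D.θ ∈ D.Pos := by
    have := (D.pos_iff _ hneg).mpr (by rwa [neg_sub])
    exact this
  exact D.θ_highest _ hpos' (by rw [add_sub_cancel]; exact hαΔ)

/-- If α ∈ Pos pairs with θ to 2, then α = θ. -/
theorem SimpleRootData.eq_theta_of_inner_two (D : SimpleRootData V)
    {α : V} (hα : α ∈ D.Pos) (h2 : (inner ℝ α D.θ : ℝ) = 2) : α = D.θ := by
  by_contra hne
  have hθΔ : D.θ ∈ D.Δ := D.pos_subset D.θ_pos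
  have hαΔ : α ∈ D.Δ := D.pos_subset hα
  have hβ : D.θ - α ∈ D.Pos := D.theta_sub_pos hα hne (by rw [h2]; norm_num)
  have hr := D.reflect_mem D.θ hθΔ α hαΔ
  rw [h2, D.θ_norm, show (2 * (2:ℝ) / 2 : ℝ) = 2 from by norm_num] at hr
  have hr' := D.neg_mem _ hr
  have : D.θ + (D.θ - α) ∈ D.Δ := by
    have he : D.θ + (D.θ - α) = -(α - (2:ℝ) • D.θ) := by
      rw [two_smul]; abel
    rwa [he]
  exact D.θ_highest _ hβ this


/-- the number of positive roots not orthogonal to θ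
equals 2h∨ − 3. -/
theorem card_nonOrth (D : SimpleRootData V) :
    (D.nonOrth.card : ℝ) = 2 * D.h - 3 := by
  have hθΔ : D.θ ∈ D.Δ := D.pos_subset D.θ_pos
  -- integrality of (α, θ)
  have hint : ∀ α ∈ D.Δ, ∃ n : ℤ, (inner ℝ α D.θ : ℝ) = n := by
    intro α hα
    obtain ⟨n, hn⟩ := D.integral D.θ hθΔ α hα
    refine ⟨n, ?_⟩
    rw [D.θ_norm] at hn
    field_simp at hn
    linarith
  -- every element of nonOrth other than θ pairs with θ to 1
  have hone : ∀ α ∈ D.nonOrth, α ≠ D.θ → (inner ℝ α D.θ : ℝ) = 1 := by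
    intro α hαN hne
    rw [SimpleRootData.nonOrth, mem_filter] at hαN
    obtain ⟨hαP, hα0⟩ := hαN
    obtain ⟨n, hn⟩ := hint α (D.pos_subset hαP)
    have hge : 0 ≤ (inner ℝ α D.θ : ℝ) := D.inner_theta_nonneg hαP
    have hgt : 0 < (inner ℝ α D.θ : ℝ) := lt_of_le_of_ne hge (Ne.symm hα0)
    have hβ : D.θ - α ∈ D.Pos := D.theta_sub_pos hαP hne hgt
    have hβge : 0 ≤ (inner ℝ (D.θ - α) D.θ : ℝ) := D.inner_theta_nonneg hβ
    rw [inner_sub_left, D.θ_norm] at hβge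
    have hle2 : (inner ℝ α D.θ : ℝ) ≤ 2 := by linarith
    have hne2 : (inner ℝ α D.θ : ℝ) ≠ 2 := fun h => hne (D.eq_theta_of_inner_two hαP h)
    -- n is an integer with 0 < n ≤ 2, n ≠ 2
    have hn1 : (0:ℤ) < n := by exact_mod_cast hn ▸ hgt
    have hn2 : n < 2 := by
      have : (n:ℝ) < 2 := lt_of_le_of_ne (hn ▸ hle2) (hn ▸ hne2)
      exact_mod_cast this
    have : n = 1 := by omega
    rw [hn, this, Int.cast_one]
  have hθN : D.θ ∈ D.nonOrth := by
    rw [SimpleRootData.nonOrth, mem_filter]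
    exact ⟨D.θ_pos, by rw [D.θ_norm]; norm_num⟩
  -- sum of (α,θ) over positive roots equals 2(h-1)
  have hρ : (inner ℝ D.ρ D.θ : ℝ) = (2:ℝ)⁻¹ * ∑ α ∈ D.Pos, (inner ℝ α D.θ : ℝ) := by
    rw [SimpleRootData.ρ, real_inner_smul_left, sum_inner]
  have hsum : ∑ α ∈ D.Pos, (inner ℝ α D.θ : ℝ) = 2 * D.h - 2 := by
    rw [SimpleRootData.h, hρ]; ring
  -- restrict sum to nonOrth
  have hfilt : ∑ α ∈ D.nonOrth, (inner ℝ α D.θ : ℝ) = ∑ α ∈ D.Pos, (inner ℝ α D.θ : ℝ) := by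
    rw [SimpleRootData.nonOrth]
    exact Finset.sum_filter_ne_zero D.Pos
  -- compute sum over nonOrth
  have herase : ∑ α ∈ D.nonOrth.erase D.θ, (inner ℝ α D.θ : ℝ)
      = ((D.nonOrth.erase D.θ).card : ℝ) := by
    rw [Finset.sum_congr rfl (fun α hα => hone α (Finset.mem_of_mem_erase hα)
      (Finset.ne_of_mem_erase hα))]
    rw [Finset.sum_const, nsmul_eq_mul, mul_one]
  have hsplit : ∑ α ∈ D.nonOrth.erase D.θ, (inner ℝ α D.θ : ℝ) + (inner ℝ D.θ D.θ : ℝ)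
      = ∑ α ∈ D.nonOrth, (inner ℝ α D.θ : ℝ) := Finset.sum_erase_add _ _ hθN
  have hcard : (D.nonOrth.erase D.θ).card + 1 = D.nonOrth.card :=
    Finset.card_erase_add_one hθN
  have hcardR : ((D.nonOrth.erase D.θ).card : ℝ) + 1 = (D.nonOrth.card : ℝ) := by
    exact_mod_cast hcard
  rw [D.θ_norm, herase] at hsplit
  rw [hfilt, hsum] at hsplit
  linarith
end Aux
end

section
/- The length of the reflection r_θ in the highest root θ, as an element of the Weyl group, equals 2h∨ − 3, where h∨ is the dual Coxeter number. -/
open RealInnerProductSpace Finset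
open scoped Classical

namespace SimpleRootData

section Aux

variable {V : Type*} [NormedAddCommGroup V] [InnerProductSpace ℝ V]
  [FiniteDimensional ℝ V] (D : SimpleRootData V)

lemma theta_mem : D.θ ∈ D.Δ := D.pos_subset D.θ_pos

lemma root_inner_self_pos {α : V} (hα : α ∈ D.Δ) : (0:ℝ) < inner ℝ α α := by
  have h0 : α ≠ 0 := by rintro rfl; exact D.zero_not_mem hα
  exact lt_of_le_of_ne real_inner_self_nonneg (Ne.symm (inner_self_ne_zero.mpr h0))

lemma inner_theta_int {α : V} (hα : α ∈ D.Δ) : ∃ n : ℤ, (inner ℝ α D.θ : ℝ) = n := by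
  obtain ⟨n, hn⟩ := D.integral D.θ D.theta_mem α hα
  refine ⟨n, ?_⟩
  rw [D.θ_norm] at hn
  linarith [hn]

lemma strict_cs {α : V} (hα : α ∈ D.Δ) (h1 : α ≠ D.θ) (h2 : α ≠ -D.θ) :
    (inner ℝ α D.θ : ℝ)^2 < 2 * (inner ℝ α α : ℝ) := by
  set c : ℝ := inner ℝ α D.θ with hc
  set v : V := (2:ℝ) • α - c • D.θ with hv
  have hvne : v ≠ 0 := by
    intro h0
    have hαeq : α = (c/2) • D.θ := by
      have : (2:ℝ) • α = c • D.θ := by rwa [sub_eq_zero] at h0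
      have := congrArg (fun x => (2:ℝ)⁻¹ • x) this
      simpa [smul_smul, div_eq_inv_mul] using this
    have hmem : (c/2) • D.θ ∈ D.Δ := hαeq ▸ hα
    rcases D.reduced D.θ D.theta_mem (c/2) hmem with h | h
    · exact h1 (by rw [hαeq, h, one_smul])
    · exact h2 (by rw [hαeq, h, neg_one_smul])
  have hpos : (0:ℝ) < inner ℝ v v :=
    lt_of_le_of_ne real_inner_self_nonneg (Ne.symm (inner_self_ne_zero.mpr hvne))
  have hexp : (inner ℝ v v : ℝ) = 4 * (inner ℝ α α : ℝ) - 2 * c^2 := by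
    have hsymm : (inner ℝ D.θ α : ℝ) = c := by rw [hc, real_inner_comm]
    simp only [hv, inner_sub_left, inner_sub_right, real_inner_smul_left,
      real_inner_smul_right, hsymm, ← hc, D.θ_norm]
    ring
  nlinarith [hpos, hexp]

lemma ne_neg_theta {α : V} (hα : α ∈ D.Pos) : α ≠ -D.θ := by
  intro h
  have : -α ∈ D.Pos := by rw [h, neg_neg]; exact D.θ_pos
  exact (D.pos_iff α (D.pos_subset hα)).mp hα (by simpa [h] using this)

lemma inner_theta_nonneg_s4 {α : V} (hα : α ∈ D.Pos) : (0:ℝ) ≤ inner ℝ α D.θ := by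
  by_contra hneg
  push_neg at hneg
  have hαΔ : α ∈ D.Δ := D.pos_subset hα
  have h1 : α ≠ D.θ := by
    intro h; rw [h, D.θ_norm] at hneg; linarith
  have h2 : α ≠ -D.θ := D.ne_neg_theta hα
  have hcs := D.strict_cs hαΔ h1 h2
  obtain ⟨n, hn⟩ := D.inner_theta_int hαΔ
  obtain ⟨m, hm⟩ := D.integral α hαΔ D.θ D.theta_mem
  have ha : (0:ℝ) < inner ℝ α α := D.root_inner_self_pos hαΔ
  have hθα : (inner ℝ D.θ α : ℝ) = inner ℝ α D.θ := real_inner_comm _ _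
  have hnneg : n ≤ -1 := by
    have : n < 0 := by exact_mod_cast (show (n:ℝ) < 0 by rw [← hn]; exact hneg)
    omega
  have hmneg : m ≤ -1 := by
    have : (m:ℝ) < 0 := by
      rw [← hm]
      have : 2 * (inner ℝ D.θ α : ℝ) < 0 := by rw [hθα]; linarith
      exact div_neg_of_neg_of_pos this ha
    have : m < 0 := by exact_mod_cast this
    omega
  have hnm : (n:ℝ) * m < 4 := by
    have hnm' : (n:ℝ) * m = 2 * (inner ℝ α D.θ : ℝ)^2 / (inner ℝ α α : ℝ) := by
      rw [← hn, ← hm, hθα]; field_simp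
    rw [hnm']
    rw [div_lt_iff₀ ha]
    nlinarith
  have hkey : n = -1 ∨ m = -1 := by
    by_contra hcon
    push_neg at hcon
    obtain ⟨hc1, hc2⟩ := hcon
    have hn2 : n ≤ -2 := by omega
    have hm2 : m ≤ -2 := by omega
    have : (4:ℝ) ≤ (n:ℝ) * m := by
      have : (4:ℤ) ≤ n * m := by nlinarith
      exact_mod_cast this
    linarith
  have hsum : D.θ + α ∉ D.Δ := D.θ_highest α hα
  rcases hkey with h | h
  · have := D.reflect_mem D.θ D.theta_mem α hαΔ
    rw [show 2 * (inner ℝ α D.θ : ℝ) / (inner ℝ D.θ D.θ : ℝ) = (n:ℝ) by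
      rw [D.θ_norm, ← hn]; ring] at this
    rw [h] at this
    simp only [Int.cast_neg, Int.cast_one, neg_one_smul, sub_neg_eq_add] at this
    exact hsum (by rwa [add_comm] at this)
  · have := D.reflect_mem α hαΔ D.θ D.theta_mem
    rw [hm, h] at this
    simp only [Int.cast_neg, Int.cast_one, neg_one_smul, sub_neg_eq_add] at this
    exact hsum this

lemma inner_theta_le_one {α : V} (hα : α ∈ D.Pos) (hne : α ≠ D.θ) :
    (inner ℝ α D.θ : ℝ) ≤ 1 := by
  by_contra hgt
  push_neg at hgt
  have hαΔ : α ∈ D.Δ := D.pos_subset hα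
  have h2 : α ≠ -D.θ := D.ne_neg_theta hα
  have hcs := D.strict_cs hαΔ hne h2
  obtain ⟨n, hn⟩ := D.inner_theta_int hαΔ
  obtain ⟨m, hm⟩ := D.integral α hαΔ D.θ D.theta_mem
  have ha : (0:ℝ) < inner ℝ α α := D.root_inner_self_pos hαΔ
  have hθα : (inner ℝ D.θ α : ℝ) = inner ℝ α D.θ := real_inner_comm _ _
  have hn2 : 2 ≤ n := by
    have : (1:ℤ) < n := by exact_mod_cast (show (1:ℝ) < n by rw [← hn]; exact hgt)
    omega
  have hm1 : 1 ≤ m := by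
    have : (0:ℝ) < m := by
      rw [← hm]
      apply div_pos _ ha
      rw [hθα]; linarith
    have : (0:ℤ) < m := by exact_mod_cast this
    omega
  have hnm : (n:ℝ) * m < 4 := by
    have hnm' : (n:ℝ) * m = 2 * (inner ℝ α D.θ : ℝ)^2 / (inner ℝ α α : ℝ) := by
      rw [← hn, ← hm, hθα]; field_simp
    rw [hnm', div_lt_iff₀ ha]
    nlinarith
  have hmeq : m = 1 := by
    by_contra hcon
    have : 2 ≤ m := by omega
    have : (4:ℝ) ≤ (n:ℝ) * m := by
      have : (4:ℤ) ≤ n * m := by nlinarith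
      exact_mod_cast this
    linarith
  -- θ - α is a root
  have hsubΔ : D.θ - α ∈ D.Δ := by
    have := D.reflect_mem α hαΔ D.θ D.theta_mem
    rw [hm, hmeq] at this
    simpa using this
  have hsubPos : D.θ - α ∈ D.Pos := by
    by_contra hnp
    have hneg : -(D.θ - α) ∈ D.Pos := by
      by_contra hnp2
      exact hnp ((D.pos_iff (D.θ - α) hsubΔ).mpr hnp2)
    rw [neg_sub] at hneg
    have := D.θ_highest (α - D.θ) hneg
    rw [show D.θ + (α - D.θ) = α by abel] at this
    exact this hαΔ
  -- from positivity of θ - α, inner ℝ (θ-α) θ ≥ 0, so c ≤ 2, hence c = 2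
  have hc2 : (inner ℝ α D.θ : ℝ) = 2 := by
    have h0 := D.inner_theta_nonneg_s4 hsubPos
    rw [inner_sub_left, D.θ_norm] at h0
    have hcle : (inner ℝ α D.θ : ℝ) ≤ 2 := by linarith
    have hle2 : n ≤ 2 := by exact_mod_cast (show (n:ℝ) ≤ 2 by rw [← hn]; exact hcle)
    have : n = 2 := by omega
    rw [hn, this]; norm_num
  -- then α - 2θ is a root, so 2θ - α = θ + (θ - α) is a root, contradiction
  have hrefl : α - (2:ℝ) • D.θ ∈ D.Δ := by
    have := D.reflect_mem D.θ D.theta_mem α hαΔ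
    rw [show 2 * (inner ℝ α D.θ : ℝ) / (inner ℝ D.θ D.θ : ℝ) = (2:ℝ) by
      rw [D.θ_norm, hc2]; ring] at this
    exact this
  have hneg' : -(α - (2:ℝ) • D.θ) ∈ D.Δ := D.neg_mem _ hrefl
  have heq : -(α - (2:ℝ) • D.θ) = D.θ + (D.θ - α) := by
    rw [two_smul]; abel
  rw [heq] at hneg'
  exact D.θ_highest (D.θ - α) hsubPos hneg'

end Aux

end SimpleRootData

open SimpleRootData

variable {V : Type*} [NormedAddCommGroup V] [InnerProductSpace ℝ V]
  [FiniteDimensional ℝ V]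

/-- the length of r_θ in the Weyl group, i.e. the number of
positive roots sent by r_θ to negative roots, equals 2h∨ − 3. -/
theorem length_rtheta (D : SimpleRootData V) :
    (((D.Pos.filter fun α => D.rθ α ∉ D.Pos).card : ℝ)) = 2 * D.h - 3 := by
  -- the filtered set equals nonOrth
  have hfilter : (D.Pos.filter fun α => D.rθ α ∉ D.Pos) = D.nonOrth := by
    unfold SimpleRootData.nonOrth
    apply Finset.filter_congr
    intro α hα
    have hαΔ : α ∈ D.Δ := D.pos_subset hα
    constructor
    · intro hnp
      intro hc0
      apply hnp
      have : D.rθ α = α := by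
        unfold SimpleRootData.rθ
        rw [hc0]
        simp
      rw [this]; exact hα
    · intro hc0 hmem
      have hnn := D.inner_theta_nonneg_s4 hα
      have hcpos : (0:ℝ) < inner ℝ α D.θ := lt_of_le_of_ne hnn (Ne.symm hc0)
      have hval : (inner ℝ (D.rθ α) D.θ : ℝ) = -(inner ℝ α D.θ : ℝ) := by
        unfold SimpleRootData.rθ
        rw [inner_sub_left, real_inner_smul_left, D.θ_norm]
        ring
      have := D.inner_theta_nonneg_s4 hmem
      rw [hval] at this
      linarith
  rw [hfilter]
  -- the sum of inner ℝ products over positive roots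
  have hsum : ∑ α ∈ D.Pos, (inner ℝ α D.θ : ℝ) = 2 * D.h - 2 := by
    have hρ : (inner ℝ D.ρ D.θ : ℝ) = (2:ℝ)⁻¹ * ∑ α ∈ D.Pos, (inner ℝ α D.θ : ℝ) := by
      unfold SimpleRootData.ρ
      rw [real_inner_smul_left, sum_inner]
    have hh : D.h = (inner ℝ D.ρ D.θ : ℝ) + 1 := rfl
    rw [hh, hρ]; ring
  have hsum2 : ∑ α ∈ D.nonOrth, (inner ℝ α D.θ : ℝ) = ∑ α ∈ D.Pos, (inner ℝ α D.θ : ℝ) := by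
    unfold SimpleRootData.nonOrth
    exact Finset.sum_filter_ne_zero D.Pos
  have hθmem : D.θ ∈ D.nonOrth := by
    unfold SimpleRootData.nonOrth
    rw [Finset.mem_filter]
    refine ⟨D.θ_pos, ?_⟩
    rw [D.θ_norm]; norm_num
  have herase : ∑ α ∈ D.nonOrth.erase D.θ, (inner ℝ α D.θ : ℝ)
      = ((D.nonOrth.erase D.θ).card : ℝ) := by
    rw [Finset.card_eq_sum_ones, Nat.cast_sum]
    apply Finset.sum_congr rfl
    intro α hαe
    have hne : α ≠ D.θ := Finset.ne_of_mem_erase hαe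
    have hαm : α ∈ D.nonOrth := Finset.mem_of_mem_erase hαe
    have hαPos : α ∈ D.Pos := Finset.mem_of_mem_filter α hαm
    have hc0 : (inner ℝ α D.θ : ℝ) ≠ 0 := (Finset.mem_filter.mp hαm).2
    have hnn := D.inner_theta_nonneg_s4 hαPos
    have hle := D.inner_theta_le_one hαPos hne
    obtain ⟨n, hn⟩ := D.inner_theta_int (D.pos_subset hαPos)
    have h1 : (0:ℤ) < n := by
      exact_mod_cast (show (0:ℝ) < n by rw [← hn]; exact lt_of_le_of_ne hnn (Ne.symm hc0))
    have h2 : n ≤ 1 := by exact_mod_cast (show (n:ℝ) ≤ 1 by rw [← hn]; exact hle)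
    have : n = 1 := by omega
    rw [hn, this]; norm_num
  have hsplit := Finset.sum_erase_add D.nonOrth (fun α => (inner ℝ α D.θ : ℝ)) hθmem
  have hcard := Finset.card_erase_add_one hθmem
  have hcardR : ((D.nonOrth.erase D.θ).card : ℝ) + 1 = (D.nonOrth.card : ℝ) := by
    exact_mod_cast hcard
  beta_reduce at hsplit
  rw [herase, D.θ_norm, hsum2, hsum] at hsplit
  linarith
end
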